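/- arXiv:2502.04155 — 2 statements merged into one kernel-verified Lean document; each statement's English description precedes it below -/
import Mathlib

section
/- Suppose a feasible configuration x is not a Nash equilibrium: there exist indices i,j,k and modes m,m' with x_{ijk}^m > 0, c_{ijk}^{m'} < c_{ijk}^m, and the capacity constraint for (i,m') strictly slack, i.e., ∑_{j',k'} d_{ij'k'} x_{ij'k'}^{m'} < C_i^{m'}. Then, assuming d_{ijk} > 0, there exists ε > 0 such that the configuration x' obtained by decreasing x_{ijk}^m by ε and increasing x_{ijk}^{m'} by ε is feasible and has strictly smaller total cost ∑ c P x than x. -/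
/-- If a feasible configuration is not a Nash equilibrium — i.e. some
travelers on mode `m` could switch to a strictly cheaper, strictly slack mode
`m'` — then for small `ε > 0` moving a share `ε` of population `k` on route
`(i,j)` from mode `m` to mode `m'` stays feasible and strictly decreases the
total cost. -/
theorem improving_switch (N K M : ℕ)
    (d : Fin N → Fin N → Fin K → ℝ) (Pk : Fin K → ℝ)
    (C : Fin N → Fin (M + 1) → ℝ)
    (c : Fin N → Fin N → Fin K → Fin (M + 1) → ℝ)
    (hd : ∀ i j k, 0 ≤ d i j k)
    (Feasible : (Fin N → Fin N → Fin K → Fin (M + 1) → ℝ) → Prop)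
    (hFeas : Feasible = fun x => (∀ i j k m, 0 ≤ x i j k m) ∧
      (∀ i k, ∑ m, x i i k m = 0) ∧
      (∀ i j k, i ≠ j → ∑ m, x i j k m = 1) ∧
      (∀ k, ∑ i, ∑ j, ∑ m, d i j k * x i j k m = Pk k) ∧
      (∀ i m, ∑ j, ∑ k, d i j k * x i j k m ≤ C i m))
    (x : Fin N → Fin N → Fin K → Fin (M + 1) → ℝ)
    (hx : Feasible x)
    (i j : Fin N) (k : Fin K) (m m' : Fin (M + 1))
    (hpos : 0 < x i j k m)
    (hcheaper : c i j k m' < c i j k m)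
    (hslack : ∑ j', ∑ k', d i j' k' * x i j' k' m' < C i m')
    (hdijk : 0 < d i j k) :
    ∃ ε > (0 : ℝ),
      Feasible (fun i' j' k' m'' =>
        if i' = i ∧ j' = j ∧ k' = k ∧ m'' = m then x i' j' k' m'' - ε
        else if i' = i ∧ j' = j ∧ k' = k ∧ m'' = m' then x i' j' k' m'' + ε
        else x i' j' k' m'') ∧
      (∑ i', ∑ j', ∑ k', ∑ m'', c i' j' k' m'' * d i' j' k' *
          (if i' = i ∧ j' = j ∧ k' = k ∧ m'' = m then x i' j' k' m'' - ε
           else if i' = i ∧ j' = j ∧ k' = k ∧ m'' = m' then x i' j' k' m'' + ε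
           else x i' j' k' m'')) <
      (∑ i', ∑ j', ∑ k', ∑ m'', c i' j' k' m'' * d i' j' k' * x i' j' k' m'') := by
  subst hFeas
  obtain ⟨hnn, hdiag, hrow, hpop, hcap⟩ := hx
  have hmm' : m ≠ m' := by
    intro h; rw [h] at hcheaper; exact lt_irrefl _ hcheaper
  have hij : i ≠ j := by
    intro h; subst h
    have h0 := (Finset.sum_eq_zero_iff_of_nonneg
      (fun e _ => hnn i i k e)).mp (hdiag i k) m (Finset.mem_univ m)
    linarith
  set S := ∑ j', ∑ k', d i j' k' * x i j' k' m' with hS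
  set ε := min (x i j k m) ((C i m' - S) / d i j k) with hε
  have hε0 : 0 < ε := lt_min hpos (div_pos (by linarith) hdijk)
  have hε1 : ε ≤ x i j k m := min_le_left _ _
  have hε2 : S + d i j k * ε ≤ C i m' := by
    have h2 := min_le_right (x i j k m) ((C i m' - S) / d i j k)
    rw [le_div_iff₀ hdijk] at h2
    nlinarith
  have hpt : ∀ a b e f, (if a = i ∧ b = j ∧ e = k ∧ f = m then x a b e f - ε
      else if a = i ∧ b = j ∧ e = k ∧ f = m' then x a b e f + ε
      else x a b e f)
      = x a b e f + (if a = i ∧ b = j ∧ e = k ∧ f = m' then ε else 0)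
        - (if a = i ∧ b = j ∧ e = k ∧ f = m then ε else 0) := by
    intro a b e f
    by_cases hA : a = i ∧ b = j ∧ e = k ∧ f = m
    · have hB : ¬(a = i ∧ b = j ∧ e = k ∧ f = m') := fun h =>
        hmm' (hA.2.2.2.symm.trans h.2.2.2)
      simp [hA, hB, hmm']
    · by_cases hB : a = i ∧ b = j ∧ e = k ∧ f = m' <;>
        simp [hA, hB, hmm', Ne.symm hmm']
  refine ⟨ε, hε0, ⟨?_, ?_, ?_, ?_, ?_⟩, ?_⟩
  · -- nonneg
    intro a b e f
    dsimp only
    split_ifs with hA hB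
    · obtain ⟨rfl, rfl, rfl, rfl⟩ := hA; linarith
    · have := hnn a b e f; linarith
    · exact hnn a b e f
  · -- diagonal
    intro a b
    dsimp only
    have h : ∀ f : Fin (M+1), (if a = i ∧ a = j ∧ b = k ∧ f = m then x a a b f - ε
        else if a = i ∧ a = j ∧ b = k ∧ f = m' then x a a b f + ε
        else x a a b f) = x a a b f := by
      intro f
      have hP : ¬(a = i ∧ a = j) := fun h => hij (h.1.symm.trans h.2)
      have h1 : ¬(a = i ∧ a = j ∧ b = k ∧ f = m) := fun h => hP ⟨h.1, h.2.1⟩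
      have h2 : ¬(a = i ∧ a = j ∧ b = k ∧ f = m') := fun h => hP ⟨h.1, h.2.1⟩
      simp [h1, h2]
    simp only [h]
    exact hdiag a b
  · -- row sums
    intro a b e hab
    dsimp only
    simp only [hpt, Finset.sum_add_distrib, Finset.sum_sub_distrib]
    simp [ite_and, Finset.sum_ite_eq']
    exact hrow a b e hab
  · -- population
    intro k0
    dsimp only
    simp only [hpt, mul_add, mul_sub, mul_ite, mul_zero,
      Finset.sum_add_distrib, Finset.sum_sub_distrib]
    simp [ite_and, Finset.sum_ite_eq']
    exact hpop k0
  · -- capacity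
    intro i0 m0
    dsimp only
    simp only [hpt, mul_add, mul_sub, mul_ite, mul_zero,
      Finset.sum_add_distrib, Finset.sum_sub_distrib]
    simp only [ite_and, Finset.sum_ite_eq', Finset.mem_univ, if_true,
      Finset.sum_ite_irrel, Finset.sum_const_zero]
    have hc := hcap i0 m0
    have hdε : 0 ≤ d i j k * ε := le_of_lt (mul_pos hdijk hε0)
    by_cases h1 : i0 = i
    · subst h1
      by_cases h2 : m0 = m'
      · subst h2
        simp [Ne.symm hmm']
        linarith
      · by_cases h3 : m0 = m
        · subst h3; simp [h2]; linarith
        · simp [h2, h3]; linarith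
    · simp [h1]; linarith
  · -- cost
    simp only [hpt, mul_add, mul_sub, mul_ite, mul_zero,
      Finset.sum_add_distrib, Finset.sum_sub_distrib]
    simp only [ite_and, Finset.sum_ite_eq', Finset.mem_univ, if_true,
      Finset.sum_ite_irrel, Finset.sum_const_zero]
    have : c i j k m' * d i j k * ε < c i j k m * d i j k * ε := by
      apply mul_lt_mul_of_pos_right _ hε0
      exact mul_lt_mul_of_pos_right hcheaper hdijk
    linarith
end

section
/- If capacity constraints are never binding at a Nash equilibrium x (i.e., ∑_{j,k} d_{ijk} x_{ijk}^m < C_i^m for all i,m), then for all i,j,k with d_{ijk} > 0, every mode m with x_{ijk}^m > 0 satisfies c_{ijk}^m = min_{m'} c_{ijk}^{m'}, and consequently x globally minimizes the total cost ∑_{i,j,k,m} c_{ijk}^m d_{ijk} x_{ijk}^m over all configurations satisfying ∑_m x_{ijk}^m = 1 and x ≥ 0. -/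
/-- If capacity constraints are never binding at a Nash equilibrium `x`, then
every mode with positive share on a route with positive demand has minimal
cost, and consequently `x` globally minimizes total cost over all
configurations with nonnegative shares summing to one. -/
theorem slack_nash_minimizes (N K M : ℕ)
    (d : Fin N → Fin N → Fin K → ℝ) (C : Fin N → Fin (M + 1) → ℝ)
    (c : Fin N → Fin N → Fin K → Fin (M + 1) → ℝ)
    (hd : ∀ i j k, 0 ≤ d i j k) (hdii : ∀ i k, d i i k = 0)
    (x : Fin N → Fin N → Fin K → Fin (M + 1) → ℝ)
    (hfeas : (∀ i j k m, 0 ≤ x i j k m) ∧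
      (∀ i j k, i ≠ j → ∑ m, x i j k m = 1))
    (hnash : ∀ i j k m, 0 < x i j k m → ∀ m',
      c i j k m ≤ c i j k m' ∨
      (∑ j', ∑ k', d i j' k' * x i j' k' m') = C i m')
    (hslack : ∀ i m, ∑ j, ∑ k, d i j k * x i j k m < C i m) :
    (∀ i j k, 0 < d i j k → ∀ m, 0 < x i j k m → ∀ m',
      c i j k m ≤ c i j k m') ∧
    (∀ y : Fin N → Fin N → Fin K → Fin (M + 1) → ℝ,
      (∀ i j k m, 0 ≤ y i j k m) →
      (∀ i j k, i ≠ j → ∑ m, y i j k m = 1) →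
      (∑ i, ∑ j, ∑ k, ∑ m, c i j k m * d i j k * x i j k m) ≤
      (∑ i, ∑ j, ∑ k, ∑ m, c i j k m * d i j k * y i j k m)) := by
  obtain ⟨hx0, hx1⟩ := hfeas
  have key : ∀ i j k m, 0 < x i j k m → ∀ m', c i j k m ≤ c i j k m' := by
    intro i j k m hx m'
    rcases hnash i j k m hx m' with h | h
    · exact h
    · exact absurd h (ne_of_lt (hslack i m'))
  refine ⟨fun i j k _ m hx m' => key i j k m hx m', fun y hy0 hy1 => ?_⟩
  apply Finset.sum_le_sum; intro i _
  apply Finset.sum_le_sum; intro j _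
  apply Finset.sum_le_sum; intro k _
  by_cases hij : i = j
  · subst hij; simp [hdii]
  rcases eq_or_lt_of_le (hd i j k) with hd0 | hdpos
  · simp [← hd0]
  have hsum := hx1 i j k hij
  have hex : ∃ m₀, 0 < x i j k m₀ := by
    by_contra h; push_neg at h
    have : ∑ m, x i j k m ≤ 0 := Finset.sum_nonpos fun m _ => h m
    linarith
  obtain ⟨m₀, hm₀⟩ := hex
  have hcm := key i j k m₀ hm₀
  have hxe : ∑ m, c i j k m * d i j k * x i j k m = c i j k m₀ * d i j k := by
    calc ∑ m, c i j k m * d i j k * x i j k m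
        = ∑ m, c i j k m₀ * d i j k * x i j k m := by
          apply Finset.sum_congr rfl; intro m _
          rcases eq_or_lt_of_le (hx0 i j k m) with h0 | hpos
          · rw [← h0]; ring
          · rw [le_antisymm (key i j k m hpos m₀) (hcm m)]
      _ = c i j k m₀ * d i j k * ∑ m, x i j k m := by
          rw [Finset.mul_sum]
      _ = c i j k m₀ * d i j k := by rw [hsum]; ring
  rw [hxe]
  have hye : c i j k m₀ * d i j k = ∑ m, c i j k m₀ * d i j k * y i j k m := by
    rw [← Finset.mul_sum, hy1 i j k hij, mul_one]
  rw [hye]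
  apply Finset.sum_le_sum; intro m _
  exact mul_le_mul_of_nonneg_right
    (mul_le_mul_of_nonneg_right (hcm m) (hd i j k)) (hy0 i j k m)
end
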